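/- Let Γ = (I, {a_ij}) be a generalized tree with adjacency matrix A = (a_ij), viewed as a matrix over ℂ, and let λ ∈ ℂ. If r = (r_i)_{i∈I} and r' = (r'_i)_{i∈I} are two vectors with A r = λ r, A r' = λ r', and r_i ≠ 0 and r'_i ≠ 0 for all i ∈ I, then r and r' are proportional: there exists c ∈ ℂ with r' = c·r. -/

import Mathlib

/-- For a generalized tree `Γ = (I, a)` with adjacency matrix `A` over `ℂ`
and `λ ∈ ℂ`, any two eigenvectors of `A` with eigenvalue `λ` all of whose coordinates are
nonzero are proportional. -/
theorem stmt_2 {I : Type*} [Fintype I] [Nonempty I] [DecidableEq I]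
    (a : I → I → ℕ) (hsymm : ∀ i j, a i j = a j i) (hle : ∀ i j, a i j ≤ 1)
    (G : SimpleGraph I) (hG : ∀ i j, G.Adj i j ↔ i ≠ j ∧ a i j = 1)
    (htree : G.IsTree)
    (A : Matrix I I ℂ) (hA : ∀ i j, A i j = (a i j : ℂ))
    (lam : ℂ) (r r' : I → ℂ)
    (hr : A.mulVec r = lam • r) (hr0 : ∀ i, r i ≠ 0)
    (hr' : A.mulVec r' = lam • r') (hr'0 : ∀ i, r' i ≠ 0) :
    ∃ c : ℂ, r' = c • r := by
  classical
  have hAsymm : ∀ i j, A i j = A j i := fun i j => by rw [hA, hA, hsymm]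
  set w : I → I → ℂ := fun v k => A v k * (r k * r' v - r' k * r v) with hw
  have hanti : ∀ v k, w k v = - w v k := by
    intro v k; simp only [hw]; rw [hAsymm]; ring
  have hdiv : ∀ v, ∑ k, w v k = 0 := by
    intro v
    have h1 : ∑ k, A v k * r k = lam * r v := by
      have := congrFun hr v
      simpa [Matrix.mulVec, dotProduct] using this
    have h2 : ∑ k, A v k * r' k = lam * r' v := by
      have := congrFun hr' v
      simpa [Matrix.mulVec, dotProduct] using this
    have : ∑ k, w v k = (∑ k, A v k * r k) * r' v - (∑ k, A v k * r' k) * r v := by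
      rw [Finset.sum_mul, Finset.sum_mul, ← Finset.sum_sub_distrib]
      exact Finset.sum_congr rfl fun k _ => by simp only [hw]; ring
    rw [this, h1, h2]; ring
  have hzero : ∀ v k, ¬ G.Adj v k → w v k = 0 := by
    intro v k h
    by_cases hvk : v = k
    · subst hvk; simp only [hw]; ring
    · have : a v k = 0 := by
        have := (hG v k).not.mp h
        have h1 : ¬ a v k = 1 := by tauto
        have h2 := hle v k
        omega
      simp only [hw, hA, this, Nat.cast_zero, zero_mul]
  -- every edge carries zero "flux"
  have hedge : ∀ i j, G.Adj i j → w i j = 0 := by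
    intro i j hij
    have hbridge : G.IsBridge s(i, j) :=
      (SimpleGraph.isAcyclic_iff_forall_adj_isBridge.mp htree.2) hij
    set G' : SimpleGraph I := G.deleteEdges {s(i, j)} with hG'
    have hnr : ¬ G'.Reachable i j := SimpleGraph.isBridge_iff.mp hbridge
    set T : Finset I := Finset.univ.filter (fun v => G'.Reachable i v) with hT
    have hiT : i ∈ T := by
      simp only [hT, Finset.mem_filter, Finset.mem_univ, true_and]
      exact SimpleGraph.Reachable.refl i
    have hjT : j ∉ T := by simpa [hT] using hnr
    have hne : i ≠ j := hij.ne
    -- adjacency in G between T and Tᶜ only via the edge (i,j)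
    have hkey : ∀ v k, v ∈ T → k ∉ T → G.Adj v k → v = i ∧ k = j := by
      intro v k hv hk hadj
      by_cases hs : s(v, k) = s(i, j)
      · rcases Sym2.eq_iff.mp hs with ⟨hv1, hk1⟩ | ⟨hv1, hk1⟩
        · exact ⟨hv1, hk1⟩
        · exfalso; apply hjT; rw [← hv1]; exact hv
      · exfalso
        apply hk
        have hadj' : G'.Adj v k := by
          rw [hG', SimpleGraph.deleteEdges_adj]
          exact ⟨hadj, by simpa using hs⟩
        have hvT : G'.Reachable i v := by simpa [hT] using hv
        have : G'.Reachable i k := hvT.trans hadj'.reachable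
        simpa [hT] using this
    have h0 : ∑ v ∈ T, ∑ k, w v k = 0 :=
      Finset.sum_eq_zero fun v _ => hdiv v
    have hsplit : ∑ v ∈ T, ∑ k, w v k
        = (∑ v ∈ T, ∑ k ∈ T, w v k) + ∑ v ∈ T, ∑ k ∈ Tᶜ, w v k := by
      rw [← Finset.sum_add_distrib]
      exact Finset.sum_congr rfl fun v _ => (Finset.sum_add_sum_compl T _).symm
    have hTT : ∑ v ∈ T, ∑ k ∈ T, w v k = 0 := by
      have hS : ∑ v ∈ T, ∑ k ∈ T, w v k = - ∑ v ∈ T, ∑ k ∈ T, w v k := by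
        conv_lhs => rw [Finset.sum_comm]
        rw [← Finset.sum_neg_distrib]
        refine Finset.sum_congr rfl fun k _ => ?_
        rw [← Finset.sum_neg_distrib]
        exact Finset.sum_congr rfl fun v _ => hanti k v
      linear_combination hS / 2
    have hcross : ∑ v ∈ T, ∑ k ∈ Tᶜ, w v k = w i j := by
      rw [Finset.sum_eq_single i]
      · rw [Finset.sum_eq_single j]
        · intro k hk hkj
          by_contra hne0
          have hadj : G.Adj i k := by
            by_contra hnadj; exact hne0 (hzero i k hnadj)
          exact hkj ((hkey i k hiT (by simpa using hk) hadj).2)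
        · intro hj; exact absurd (Finset.mem_compl.mpr hjT) hj
      · intro v hv hvi
        apply Finset.sum_eq_zero
        intro k hk
        by_contra hne0
        have hadj : G.Adj v k := by
          by_contra hnadj; exact hne0 (hzero v k hnadj)
        exact hvi (hkey v k hv (by simpa using hk) hadj).1
      · intro hi; exact absurd hiT hi
    rw [hsplit, hTT, hcross, zero_add] at h0
    exact h0
  -- hence the ratio r'/r is constant along edges
  have hratio : ∀ i j, G.Adj i j → r' i / r i = r' j / r j := by
    intro i j hij
    have h1 : a i j = 1 := ((hG i j).mp hij).2
    have h2 := hedge i j hij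
    simp only [hw, hA, h1, Nat.cast_one, one_mul, sub_eq_zero] at h2
    rw [div_eq_div_iff (hr0 i) (hr0 j)]
    linear_combination h2
  have hwalk : ∀ (u v : I) (p : G.Walk u v), r' u / r u = r' v / r v := by
    intro u v p
    induction p with
    | nil => rfl
    | cons h p ih => exact (hratio _ _ h).trans ih
  obtain ⟨i0⟩ := (inferInstance : Nonempty I)
  refine ⟨r' i0 / r i0, ?_⟩
  funext v
  obtain ⟨p⟩ := htree.1.preconnected i0 v
  have hvv := hwalk i0 v p
  simp only [Pi.smul_apply, smul_eq_mul]
  rw [hvv, div_mul_cancel₀ _ (hr0 v)]
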